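/- Let n ≥ 3 be an integer. There exists a constant C > 0, depending only on n, such that for all x₁, x₂ ∈ ℝⁿ and all ε₁, ε₂, ρ > 0: ∫_{{y ∈ ℝⁿ : |y−x₂| ≤ 4ρ}} (ε₁/(ε₁²+|y−x₁|²))^{(n−2)/2} (ε₂/(ε₂²+|y−x₂|²))^{(n−2)/2} (ε₂²+|y−x₂|²)^{−1/2} dy ≤ C ρ ( ε₁ε₂/(ε₂² + |x₁−x₂|²) )^{(n−2)/2}. (Euclidean form of the interaction estimate proved in Corollary 3.21 of Almaraz–Sun, by splitting the domain according to whether 2|y−x₁| ≤ ε₂ + |x₁−x₂| or not.) -/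

import Mathlib

open MeasureTheory

open Metric Set

/-- `v^n - u^n ≤ n v^{n-1} (v-u)` for `0 ≤ u ≤ v`. -/
lemma aux_pow_sub_pow_le {u v : ℝ} (hu : 0 ≤ u) (huv : u ≤ v) (n : ℕ) :
    v ^ n - u ^ n ≤ (n : ℝ) * v ^ (n - 1) * (v - u) := by
  rw [← geom_sum₂_mul]
  have hsum : (∑ i ∈ Finset.range n, v ^ i * u ^ (n - 1 - i)) ≤ (n : ℝ) * v ^ (n - 1) := by
    calc (∑ i ∈ Finset.range n, v ^ i * u ^ (n - 1 - i))
        ≤ ∑ i ∈ Finset.range n, v ^ (n - 1) := by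
          apply Finset.sum_le_sum
          intro i hi
          have hi' : i < n := Finset.mem_range.mp hi
          have : v ^ i * u ^ (n - 1 - i) ≤ v ^ i * v ^ (n - 1 - i) := by
            have hv : 0 ≤ v := hu.trans huv
            exact mul_le_mul_of_nonneg_left (pow_le_pow_left₀ hu huv _) (pow_nonneg hv _)
          refine this.trans ?_
          rw [← pow_add]
          have : i + (n - 1 - i) = n - 1 := by omega
          rw [this]
      _ = (n : ℝ) * v ^ (n - 1) := by
          rw [Finset.sum_const, Finset.card_range, nsmul_eq_mul]
  exact mul_le_mul_of_nonneg_right hsum (by linarith)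

lemma annulus_lintegral_bound (n : ℕ) (hn : 1 ≤ n) (c : EuclideanSpace ℝ (Fin n)) (a b : ℝ)
    (ha : 0 ≤ a) :
    ∫⁻ y in {y : EuclideanSpace ℝ (Fin n) | a ≤ ‖y - c‖ ∧ ‖y - c‖ ≤ b},
        ENNReal.ofReal (‖y - c‖ ^ (-((n : ℝ) - 1))) ∂volume
      ≤ ENNReal.ofReal ((n : ℝ) * 2 ^ (n - 1)) * volume (ball (0 : EuclideanSpace ℝ (Fin n)) 1)
          * ENNReal.ofReal (b - a) := by
  haveI : Nonempty (Fin n) := Fin.pos_iff_nonempty.mp (by omega)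
  set B : ENNReal := volume (ball (0 : EuclideanSpace ℝ (Fin n)) 1) with hB
  have hBne : B ≠ ⊤ := measure_ball_lt_top.ne
  set κ : ℝ := (n : ℝ) * 2 ^ (n - 1) with hκ
  have hκ0 : 0 ≤ κ := by positivity
  -- trivial case b ≤ 0
  rcases le_or_gt b 0 with hb | hb
  · have hnull : volume {y : EuclideanSpace ℝ (Fin n) | a ≤ ‖y - c‖ ∧ ‖y - c‖ ≤ b} = 0 := by
      refine measure_mono_null (fun y hy => ?_) (volume.addHaar_sphere c 0)
      have h0 : ‖y - c‖ = 0 := le_antisymm (hy.2.trans hb) (norm_nonneg _)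
      show dist y c = 0
      rw [dist_eq_norm, h0]
    rw [setLIntegral_measure_zero _ _ hnull]
    exact zero_le
  -- main case
  set u : ℕ → ℝ := fun k => max a (b / 2 ^ (k + 1)) with hu
  set v : ℕ → ℝ := fun k => min b (b / 2 ^ k) with hv
  set S : ℕ → Set (EuclideanSpace ℝ (Fin n)) := fun k => {y | u k < ‖y - c‖ ∧ ‖y - c‖ ≤ v k} with hS
  have hu0 : ∀ k, 0 ≤ u k := fun k => ha.trans (le_max_left _ _)
  -- covering
  have hcover : {y : EuclideanSpace ℝ (Fin n) | a ≤ ‖y - c‖ ∧ ‖y - c‖ ≤ b} ⊆ sphere c a ∪ ⋃ k, S k := by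
    intro y hy
    rcases eq_or_lt_of_le hy.1 with heq | hlt
    · left
      show dist y c = a
      rw [dist_eq_norm, ← heq]
    · right
      have hr0 : 0 < ‖y - c‖ := lt_of_le_of_lt ha hlt
      have hex : ∃ k : ℕ, b / 2 ^ (k + 1) < ‖y - c‖ := by
        obtain ⟨m, hm⟩ := pow_unbounded_of_one_lt (b / ‖y - c‖) (one_lt_two (α := ℝ))
        refine ⟨m, ?_⟩
        rw [div_lt_iff₀ (by positivity)]
        rw [div_lt_iff₀ hr0] at hm
        calc b < ‖y - c‖ * 2 ^ m := by linarith [hm, mul_comm ((2:ℝ) ^ m) ‖y - c‖]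
          _ ≤ ‖y - c‖ * 2 ^ (m + 1) := by
              apply mul_le_mul_of_nonneg_left (pow_le_pow_right₀ one_le_two (by omega)) hr0.le
      set k := Nat.find hex with hk
      have h1 : b / 2 ^ (k + 1) < ‖y - c‖ := Nat.find_spec hex
      have h2 : ‖y - c‖ ≤ b / 2 ^ k := by
        rcases Nat.eq_zero_or_pos k with h0 | h0
        · rw [h0]; simpa using hy.2
        · have := Nat.find_min hex (m := k - 1) (by omega)
          push_neg at this
          have hkk : k - 1 + 1 = k := by omega
          rwa [hkk] at this
      exact mem_iUnion.mpr ⟨k, ⟨max_lt hlt h1, le_min hy.2 h2⟩⟩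
  -- per-shell bound
  have key : ∀ k : ℕ, ∫⁻ y in S k, ENNReal.ofReal (‖y - c‖ ^ (-((n : ℝ) - 1))) ∂volume
      ≤ ENNReal.ofReal κ * B * volume (Ioc (u k) (v k)) := by
    intro k
    rcases le_or_gt (v k) (u k) with hvu | hvu
    · have hSk : S k = ∅ := by
        ext y; simp only [hS, mem_setOf_eq, mem_empty_iff_false, iff_false, not_and, not_le]
        intro h; exact lt_of_le_of_lt hvu h
      rw [hSk, Measure.restrict_empty, lintegral_zero_measure]
      exact zero_le
    · have hvpos : 0 < v k := lt_of_le_of_lt (hu0 k) hvu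
      set t : ℝ := b / 2 ^ (k + 1) with ht
      have htpos : 0 < t := by positivity
      have htu : t ≤ u k := le_max_right _ _
      have hv2t : v k ≤ 2 * t := by
        have : v k ≤ b / 2 ^ k := min_le_right _ _
        refine this.trans (le_of_eq ?_)
        rw [ht]; field_simp; ring
      have step1 : ∫⁻ y in S k, ENNReal.ofReal (‖y - c‖ ^ (-((n : ℝ) - 1))) ∂volume
          ≤ ENNReal.ofReal (t ^ (-((n : ℝ) - 1))) * volume (S k) := by
        calc ∫⁻ y in S k, ENNReal.ofReal (‖y - c‖ ^ (-((n : ℝ) - 1))) ∂volume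
            ≤ ∫⁻ _ in S k, ENNReal.ofReal (t ^ (-((n : ℝ) - 1))) ∂volume := by
              apply setLIntegral_mono measurable_const
              intro y hy
              apply ENNReal.ofReal_le_ofReal
              apply Real.rpow_le_rpow_of_nonpos htpos (htu.trans hy.1.le)
              simp only [neg_nonpos]
              have : (1 : ℝ) ≤ n := by exact_mod_cast hn
              linarith
          _ = ENNReal.ofReal (t ^ (-((n : ℝ) - 1))) * volume (S k) := setLIntegral_const _ _
      have step2 : volume (S k) ≤ ENNReal.ofReal (v k ^ n - u k ^ n) * B := by
        have hsub : S k ∪ closedBall c (u k) ⊆ closedBall c (v k) := by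
          rintro y (hy | hy)
          · exact mem_closedBall.mpr (by rw [dist_eq_norm]; exact hy.2)
          · exact closedBall_subset_closedBall hvu.le hy
        have hdisj : Disjoint (S k) (closedBall c (u k)) := by
          rw [Set.disjoint_left]
          intro y hy hy'
          have : ‖y - c‖ ≤ u k := by rwa [mem_closedBall, dist_eq_norm] at hy'
          exact absurd this (not_le.mpr hy.1)
        have hle : volume (S k) + volume (closedBall c (u k)) ≤ volume (closedBall c (v k)) := by
          rw [← measure_union hdisj measurableSet_closedBall]
          exact measure_mono hsub
        rw [Measure.addHaar_closedBall volume c (hu0 k), Measure.addHaar_closedBall volume c hvpos.le,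
          finrank_euclideanSpace_fin] at hle
        have heq : ENNReal.ofReal (v k ^ n) = ENNReal.ofReal (v k ^ n - u k ^ n) + ENNReal.ofReal (u k ^ n) := by
          rw [← ENNReal.ofReal_add (by nlinarith [pow_le_pow_left₀ (hu0 k) hvu.le n]) (by positivity)]
          ring_nf
        rw [heq, add_mul] at hle
        have hfin : ENNReal.ofReal (u k ^ n) * B ≠ ⊤ := ENNReal.mul_ne_top ENNReal.ofReal_ne_top hBne
        exact ENNReal.le_of_add_le_add_right hfin hle
      calc ∫⁻ y in S k, ENNReal.ofReal (‖y - c‖ ^ (-((n : ℝ) - 1))) ∂volume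
          ≤ ENNReal.ofReal (t ^ (-((n : ℝ) - 1))) * (ENNReal.ofReal (v k ^ n - u k ^ n) * B) :=
            step1.trans (mul_le_mul_right step2 _)
        _ ≤ ENNReal.ofReal κ * B * volume (Ioc (u k) (v k)) := by
            rw [Real.volume_Ioc, ← mul_assoc, ← ENNReal.ofReal_mul (Real.rpow_nonneg htpos.le _),
              mul_comm (ENNReal.ofReal κ) B, mul_assoc, ← ENNReal.ofReal_mul hκ0, mul_comm B]
            apply mul_le_mul_left (ENNReal.ofReal_le_ofReal ?_) B
            -- real inequality: t^(-(n-1)) * (v^n - u^n) ≤ κ * (v - u)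
            have hcast : ((n - 1 : ℕ) : ℝ) = (n : ℝ) - 1 := by
              rw [Nat.cast_sub hn, Nat.cast_one]
            have htpow : t ^ (-((n : ℝ) - 1)) = (t ^ (n - 1 : ℕ))⁻¹ := by
              rw [← hcast, Real.rpow_neg htpos.le, Real.rpow_natCast]
            rw [htpow]
            have hvn : v k ^ n - u k ^ n ≤ (n : ℝ) * v k ^ (n - 1) * (v k - u k) :=
              aux_pow_sub_pow_le (hu0 k) hvu.le n
            have hvpow : v k ^ (n - 1) ≤ 2 ^ (n - 1) * t ^ (n - 1) := by
              calc v k ^ (n - 1) ≤ (2 * t) ^ (n - 1) := pow_le_pow_left₀ hvpos.le hv2t _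
                _ = 2 ^ (n - 1) * t ^ (n - 1) := mul_pow _ _ _
            have htne : (t ^ (n - 1 : ℕ)) ≠ 0 := by positivity
            have h1 : (t ^ (n - 1 : ℕ))⁻¹ * (v k ^ n - u k ^ n)
                ≤ (t ^ (n - 1 : ℕ))⁻¹ * ((n : ℝ) * (2 ^ (n - 1) * t ^ (n - 1)) * (v k - u k)) := by
              apply mul_le_mul_of_nonneg_left _ (by positivity)
              refine hvn.trans ?_
              apply mul_le_mul_of_nonneg_right _ (by linarith)
              exact mul_le_mul_of_nonneg_left hvpow (by positivity)
            refine h1.trans (le_of_eq ?_)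
            field_simp [hκ]
            ring
  -- sum up
  have hdisjIoc : Pairwise (Function.onFun Disjoint fun k => Ioc (u k) (v k)) := by
    have hmono : ∀ j k : ℕ, j < k → Disjoint (Ioc (u j) (v j)) (Ioc (u k) (v k)) := by
      intro j k hjk
      apply Set.disjoint_of_subset (Ioc_subset_Ioc (le_max_right a _) (min_le_right _ _))
        (Ioc_subset_Ioc (le_max_right a _) (min_le_right _ _))
      rw [Set.Ioc_disjoint_Ioc]
      refine le_trans (inf_le_right) (le_trans ?_ (le_sup_left))
      apply div_le_div_of_nonneg_left hb.le (by positivity)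
      exact pow_le_pow_right₀ one_le_two (by omega)
    intro j k hjk
    rcases lt_or_gt_of_ne hjk with h | h
    exacts [hmono j k h, (hmono k j h).symm]
  calc ∫⁻ y in {y : EuclideanSpace ℝ (Fin n) | a ≤ ‖y - c‖ ∧ ‖y - c‖ ≤ b},
        ENNReal.ofReal (‖y - c‖ ^ (-((n : ℝ) - 1))) ∂volume
      ≤ ∫⁻ y in sphere c a ∪ ⋃ k, S k, ENNReal.ofReal (‖y - c‖ ^ (-((n : ℝ) - 1))) ∂volume :=
        lintegral_mono_set hcover
    _ ≤ (∫⁻ y in sphere c a, ENNReal.ofReal (‖y - c‖ ^ (-((n : ℝ) - 1))) ∂volume)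
        + ∫⁻ y in ⋃ k, S k, ENNReal.ofReal (‖y - c‖ ^ (-((n : ℝ) - 1))) ∂volume :=
        lintegral_union_le _ _ _
    _ = ∫⁻ y in ⋃ k, S k, ENNReal.ofReal (‖y - c‖ ^ (-((n : ℝ) - 1))) ∂volume := by
        rw [setLIntegral_measure_zero _ _ (volume.addHaar_sphere c a), zero_add]
    _ ≤ ∑' k, ∫⁻ y in S k, ENNReal.ofReal (‖y - c‖ ^ (-((n : ℝ) - 1))) ∂volume :=
        lintegral_iUnion_le _ _
    _ ≤ ∑' k, ENNReal.ofReal κ * B * volume (Ioc (u k) (v k)) := ENNReal.tsum_le_tsum key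
    _ = ENNReal.ofReal κ * B * ∑' k, volume (Ioc (u k) (v k)) := ENNReal.tsum_mul_left
    _ = ENNReal.ofReal κ * B * volume (⋃ k, Ioc (u k) (v k)) := by
        rw [measure_iUnion hdisjIoc (fun k => measurableSet_Ioc)]
    _ ≤ ENNReal.ofReal κ * B * volume (Ioc a b) := by
        apply mul_le_mul_right
        apply measure_mono
        exact iUnion_subset fun k => Ioc_subset_Ioc (le_max_left _ _) (min_le_left _ _)
    _ = ENNReal.ofReal κ * B * ENNReal.ofReal (b - a) := by rw [Real.volume_Ioc]


lemma ptA (n : ℕ) (hn : 3 ≤ n) {ε₁ ε₂ s r₁ r₂ : ℝ} (hε₁ : 0 < ε₁) (hε₂ : 0 < ε₂) (hs : 0 ≤ s)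
    (hr₁ : 0 < r₁) (hr₂ : 0 ≤ r₂) (htri : s ≤ r₁ + r₂) (hreg : 2 * r₁ ≤ ε₂ + s) :
    (ε₁ / (ε₁ ^ 2 + r₁ ^ 2)) ^ (((n : ℝ) - 2) / 2) *
      ((ε₂ / (ε₂ ^ 2 + r₂ ^ 2)) ^ (((n : ℝ) - 2) / 2) * (ε₂ ^ 2 + r₂ ^ 2) ^ (-(1 : ℝ) / 2))
    ≤ 2 * 8 ^ (((n : ℝ) - 2) / 2) * (ε₁ * ε₂ / (ε₂ ^ 2 + s ^ 2)) ^ (((n : ℝ) - 2) / 2)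
        * r₁ ^ (-((n : ℝ) - 1)) := by
  set p : ℝ := ((n : ℝ) - 2) / 2 with hp_def
  have hp : 0 < p := by
    have : (3 : ℝ) ≤ (n : ℝ) := by exact_mod_cast hn
    rw [hp_def]; linarith
  set D : ℝ := ε₂ ^ 2 + s ^ 2 with hD_def
  have hD : 0 < D := by positivity
  set d : ℝ := ε₂ + s with hd_def
  have hd : 0 < d := by positivity
  have hX2 : 0 < ε₂ ^ 2 + r₂ ^ 2 := by positivity
  have hX1 : 0 < ε₁ ^ 2 + r₁ ^ 2 := by positivity
  have hse : s ≤ ε₂ + 2 * r₂ := by linarith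
  have hkey : D ≤ 8 * (ε₂ ^ 2 + r₂ ^ 2) := by nlinarith [sq_nonneg (ε₂ - 2 * r₂), sq_nonneg s]
  have h1 : (ε₁ / (ε₁ ^ 2 + r₁ ^ 2)) ^ p ≤ (ε₁ / r₁ ^ 2) ^ p := by
    apply Real.rpow_le_rpow (by positivity) _ hp.le
    apply div_le_div_of_nonneg_left hε₁.le (by positivity) (by nlinarith)
  have h2 : (ε₂ / (ε₂ ^ 2 + r₂ ^ 2)) ^ p ≤ (8 * ε₂ / D) ^ p := by
    apply Real.rpow_le_rpow (by positivity) _ hp.le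
    rw [div_le_div_iff₀ hX2 hD]
    nlinarith
  have h3 : (ε₂ ^ 2 + r₂ ^ 2) ^ (-(1 : ℝ) / 2) ≤ 4 / d := by
    have h3a : (ε₂ ^ 2 + r₂ ^ 2) ^ (-(1 : ℝ) / 2) ≤ (D / 8) ^ (-(1 : ℝ) / 2) :=
      Real.rpow_le_rpow_of_nonpos (by positivity) (by linarith) (by norm_num)
    refine h3a.trans ?_
    rw [show (-(1 : ℝ) / 2) = -(1 / 2) by ring, Real.rpow_neg (by positivity),
      ← Real.sqrt_eq_rpow]
    have hsq : d / 4 ≤ Real.sqrt (D / 8) := by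
      rw [show d / 4 = Real.sqrt ((d / 4) ^ 2) from (Real.sqrt_sq (by positivity)).symm]
      apply Real.sqrt_le_sqrt
      rw [hd_def, hD_def]; nlinarith [sq_nonneg (ε₂ - s)]
    rw [show (4 : ℝ) / d = (d / 4)⁻¹ by field_simp]
    exact inv_anti₀ (by positivity) hsq
  have hcomb : (ε₁ / (ε₁ ^ 2 + r₁ ^ 2)) ^ p *
      ((ε₂ / (ε₂ ^ 2 + r₂ ^ 2)) ^ p * (ε₂ ^ 2 + r₂ ^ 2) ^ (-(1 : ℝ) / 2))
      ≤ (ε₁ / r₁ ^ 2) ^ p * ((8 * ε₂ / D) ^ p * (4 / d)) := by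
    apply mul_le_mul h1 (mul_le_mul h2 h3 (Real.rpow_nonneg hX2.le _) (Real.rpow_nonneg (by positivity) _))
      (mul_nonneg (Real.rpow_nonneg (by positivity) _) (Real.rpow_nonneg hX2.le _))
      (Real.rpow_nonneg (by positivity) _)
  refine hcomb.trans ?_
  have halg : (ε₁ / r₁ ^ 2) ^ p * ((8 * ε₂ / D) ^ p * (4 / d))
      = 8 ^ p * (ε₁ * ε₂ / D) ^ p * (4 / d) * (r₁ ^ ((n : ℝ) - 2))⁻¹ := by
    rw [← mul_assoc, ← Real.mul_rpow (by positivity) (by positivity)]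
    rw [show ε₁ / r₁ ^ 2 * (8 * ε₂ / D) = 8 * (ε₁ * ε₂ / D) * (r₁ ^ 2)⁻¹ by field_simp]
    rw [Real.mul_rpow (by positivity) (by positivity),
      Real.mul_rpow (by norm_num) (by positivity),
      Real.inv_rpow (by positivity)]
    have h2p : ((r₁ ^ 2 : ℝ)) ^ p = r₁ ^ ((n : ℝ) - 2) := by
      rw [← Real.rpow_natCast r₁ 2, ← Real.rpow_mul hr₁.le]
      congr 1
      rw [hp_def]; push_cast; ring
    rw [h2p]; ring
  rw [halg]
  have hfrac : 4 / d ≤ 2 / r₁ := by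
    rw [div_le_div_iff₀ hd hr₁]; linarith
  calc 8 ^ p * (ε₁ * ε₂ / D) ^ p * (4 / d) * (r₁ ^ ((n : ℝ) - 2))⁻¹
      ≤ 8 ^ p * (ε₁ * ε₂ / D) ^ p * (2 / r₁) * (r₁ ^ ((n : ℝ) - 2))⁻¹ := by
        apply mul_le_mul_of_nonneg_right _ (by positivity)
        apply mul_le_mul_of_nonneg_left hfrac (by positivity)
    _ = 2 * 8 ^ p * (ε₁ * ε₂ / D) ^ p * r₁ ^ (-((n : ℝ) - 1)) := by
        rw [Real.rpow_neg hr₁.le, show ((n : ℝ) - 1) = ((n : ℝ) - 2) + 1 by ring,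
          Real.rpow_add_one hr₁.ne']
        field_simp

lemma ptB (n : ℕ) (hn : 3 ≤ n) {ε₁ ε₂ s r₁ r₂ : ℝ} (hε₁ : 0 < ε₁) (hε₂ : 0 < ε₂) (hs : 0 ≤ s)
    (hr₁ : 0 ≤ r₁) (hr₂ : 0 < r₂) (hreg : ε₂ + s < 2 * r₁) :
    (ε₁ / (ε₁ ^ 2 + r₁ ^ 2)) ^ (((n : ℝ) - 2) / 2) *
      ((ε₂ / (ε₂ ^ 2 + r₂ ^ 2)) ^ (((n : ℝ) - 2) / 2) * (ε₂ ^ 2 + r₂ ^ 2) ^ (-(1 : ℝ) / 2))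
    ≤ 4 ^ (((n : ℝ) - 2) / 2) * (ε₁ * ε₂ / (ε₂ ^ 2 + s ^ 2)) ^ (((n : ℝ) - 2) / 2)
        * r₂ ^ (-((n : ℝ) - 1)) := by
  set p : ℝ := ((n : ℝ) - 2) / 2 with hp_def
  have hp : 0 < p := by
    have : (3 : ℝ) ≤ (n : ℝ) := by exact_mod_cast hn
    rw [hp_def]; linarith
  set D : ℝ := ε₂ ^ 2 + s ^ 2 with hD_def
  have hD : 0 < D := by positivity
  have hX2 : 0 < ε₂ ^ 2 + r₂ ^ 2 := by positivity
  have hX1 : 0 < ε₁ ^ 2 + r₁ ^ 2 := by positivity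
  have hkey : D ≤ 4 * (ε₁ ^ 2 + r₁ ^ 2) := by nlinarith [sq_nonneg (ε₂ - s), sq_nonneg ε₁]
  have h1 : (ε₁ / (ε₁ ^ 2 + r₁ ^ 2)) ^ p ≤ (4 * ε₁ / D) ^ p := by
    apply Real.rpow_le_rpow (by positivity) _ hp.le
    rw [div_le_div_iff₀ hX1 hD]
    nlinarith
  have h2 : (ε₂ / (ε₂ ^ 2 + r₂ ^ 2)) ^ p ≤ (ε₂ / r₂ ^ 2) ^ p := by
    apply Real.rpow_le_rpow (by positivity) _ hp.le
    apply div_le_div_of_nonneg_left hε₂.le (by positivity) (by nlinarith)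
  have h3 : (ε₂ ^ 2 + r₂ ^ 2) ^ (-(1 : ℝ) / 2) ≤ r₂⁻¹ := by
    have h3a : (ε₂ ^ 2 + r₂ ^ 2) ^ (-(1 : ℝ) / 2) ≤ (r₂ ^ 2) ^ (-(1 : ℝ) / 2) :=
      Real.rpow_le_rpow_of_nonpos (by positivity) (by nlinarith) (by norm_num)
    refine h3a.trans (le_of_eq ?_)
    rw [← Real.rpow_natCast r₂ 2, ← Real.rpow_mul hr₂.le]
    norm_num [Real.rpow_neg_one]
  have hcomb : (ε₁ / (ε₁ ^ 2 + r₁ ^ 2)) ^ p *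
      ((ε₂ / (ε₂ ^ 2 + r₂ ^ 2)) ^ p * (ε₂ ^ 2 + r₂ ^ 2) ^ (-(1 : ℝ) / 2))
      ≤ (4 * ε₁ / D) ^ p * ((ε₂ / r₂ ^ 2) ^ p * r₂⁻¹) := by
    apply mul_le_mul h1 (mul_le_mul h2 h3 (Real.rpow_nonneg hX2.le _) (Real.rpow_nonneg (by positivity) _))
      (mul_nonneg (Real.rpow_nonneg (by positivity) _) (Real.rpow_nonneg hX2.le _))
      (Real.rpow_nonneg (by positivity) _)
  refine hcomb.trans (le_of_eq ?_)
  rw [← mul_assoc, ← Real.mul_rpow (by positivity) (by positivity)]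
  rw [show 4 * ε₁ / D * (ε₂ / r₂ ^ 2) = 4 * (ε₁ * ε₂ / D) * (r₂ ^ 2)⁻¹ by field_simp]
  rw [Real.mul_rpow (by positivity) (by positivity),
    Real.mul_rpow (by norm_num) (by positivity),
    Real.inv_rpow (by positivity)]
  have h2p : ((r₂ ^ 2 : ℝ)) ^ p = r₂ ^ ((n : ℝ) - 2) := by
    rw [← Real.rpow_natCast r₂ 2, ← Real.rpow_mul hr₂.le]
    congr 1
    rw [hp_def]; push_cast; ring
  rw [h2p, Real.rpow_neg hr₂.le, show ((n : ℝ) - 1) = ((n : ℝ) - 2) + 1 by ring,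
    Real.rpow_add_one hr₂.ne']
  field_simp


section helpers

lemma enn_helper (M κ r : ℝ) (hM : 0 ≤ M) (hκ : 0 ≤ κ) (B : ENNReal) :
    ENNReal.ofReal M * (ENNReal.ofReal κ * B * ENNReal.ofReal r)
      = ENNReal.ofReal (M * κ * r) * B := by
  rw [ENNReal.ofReal_mul (mul_nonneg hM hκ), ENNReal.ofReal_mul hM]
  ring

end helpers

/-- Interaction estimate (Euclidean form of Corollary 3.21 of Almaraz–Sun): for `n ≥ 3`
there is `C = C(n) > 0` such that for all `x₁, x₂ ∈ ℝⁿ` and `ε₁, ε₂, ρ > 0`,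
`∫_{|y−x₂| ≤ 4ρ} (ε₁/(ε₁²+|y−x₁|²))^{(n−2)/2} (ε₂/(ε₂²+|y−x₂|²))^{(n−2)/2}
  (ε₂²+|y−x₂|²)^{−1/2} dy ≤ C ρ (ε₁ε₂/(ε₂² + |x₁−x₂|²))^{(n−2)/2}`. -/
theorem stmt12 (n : ℕ) (hn : 3 ≤ n) :
    ∃ C : ℝ, 0 < C ∧ ∀ (x₁ x₂ : EuclideanSpace ℝ (Fin n)) (ε₁ ε₂ ρ : ℝ),
      0 < ε₁ → 0 < ε₂ → 0 < ρ →
      (∫ y in Metric.closedBall x₂ (4 * ρ),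
          (ε₁ / (ε₁ ^ 2 + ‖y - x₁‖ ^ 2)) ^ (((n : ℝ) - 2) / 2) *
            ((ε₂ / (ε₂ ^ 2 + ‖y - x₂‖ ^ 2)) ^ (((n : ℝ) - 2) / 2) *
              (ε₂ ^ 2 + ‖y - x₂‖ ^ 2) ^ (-(1 : ℝ) / 2)))
        ≤ C * ρ * (ε₁ * ε₂ / (ε₂ ^ 2 + ‖x₁ - x₂‖ ^ 2)) ^ (((n : ℝ) - 2) / 2) := by
  haveI : Nonempty (Fin n) := Fin.pos_iff_nonempty.mp (by omega)
  set p : ℝ := ((n : ℝ) - 2) / 2 with hp_def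
  have hp : 0 < p := by
    have : (3 : ℝ) ≤ (n : ℝ) := by exact_mod_cast hn
    rw [hp_def]; linarith
  set κ : ℝ := (n : ℝ) * 2 ^ (n - 1) with hκ_def
  have hκ0 : 0 < κ := by positivity
  set B : ENNReal := volume (ball (0 : EuclideanSpace ℝ (Fin n)) 1) with hB_def
  have hBne : B ≠ ⊤ := measure_ball_lt_top.ne
  have hBpos : 0 < B.toReal :=
    ENNReal.toReal_pos (measure_ball_pos volume 0 one_pos).ne' hBne
  set C : ℝ := (16 * 8 ^ p + 4 * 4 ^ p) * κ * B.toReal with hC_def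
  have hC : 0 < C := by
    have h8 : (0:ℝ) < 8 ^ p := Real.rpow_pos_of_pos (by norm_num) _
    have h4 : (0:ℝ) < 4 ^ p := Real.rpow_pos_of_pos (by norm_num) _
    rw [hC_def]; positivity
  refine ⟨C, hC, ?_⟩
  intro x₁ x₂ ε₁ ε₂ ρ hε₁ hε₂ hρ
  set s : ℝ := ‖x₁ - x₂‖ with hs_def
  have hs : 0 ≤ s := norm_nonneg _
  set d : ℝ := ε₂ + s with hd_def
  have hd : 0 < d := by positivity
  set D : ℝ := ε₂ ^ 2 + s ^ 2 with hDD_def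
  have hD : 0 < D := by positivity
  set T : ℝ := (ε₁ * ε₂ / D) ^ p with hT_def
  have hT0 : 0 ≤ T := Real.rpow_nonneg (by positivity) _
  set F : EuclideanSpace ℝ (Fin n) → ℝ := fun y =>
    (ε₁ / (ε₁ ^ 2 + ‖y - x₁‖ ^ 2)) ^ p *
      ((ε₂ / (ε₂ ^ 2 + ‖y - x₂‖ ^ 2)) ^ p * (ε₂ ^ 2 + ‖y - x₂‖ ^ 2) ^ (-(1 : ℝ) / 2))
    with hF_def
  have hFnn : ∀ y, 0 ≤ F y := by
    intro y
    have h1 : (0:ℝ) ≤ ε₁ / (ε₁ ^ 2 + ‖y - x₁‖ ^ 2) := by positivity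
    have h2 : (0:ℝ) ≤ ε₂ / (ε₂ ^ 2 + ‖y - x₂‖ ^ 2) := by positivity
    exact mul_nonneg (Real.rpow_nonneg h1 _)
      (mul_nonneg (Real.rpow_nonneg h2 _) (Real.rpow_nonneg (by positivity) _))
  have hFcont : Continuous F := by
    have hc1 : Continuous fun y : EuclideanSpace ℝ (Fin n) => ε₁ ^ 2 + ‖y - x₁‖ ^ 2 :=
      continuous_const.add (((continuous_id.sub continuous_const).norm).pow 2)
    have hc2 : Continuous fun y : EuclideanSpace ℝ (Fin n) => ε₂ ^ 2 + ‖y - x₂‖ ^ 2 :=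
      continuous_const.add (((continuous_id.sub continuous_const).norm).pow 2)
    refine Continuous.mul ?_ (Continuous.mul ?_ ?_)
    · exact (continuous_const.div hc1 (fun y => by positivity)).rpow_const (fun y => Or.inr hp.le)
    · exact (continuous_const.div hc2 (fun y => by positivity)).rpow_const (fun y => Or.inr hp.le)
    · exact hc2.rpow_const (fun y => Or.inl (by positivity))
  have hRHS0 : 0 ≤ C * ρ * T := by positivity
  show (∫ y in Metric.closedBall x₂ (4 * ρ), F y) ≤ C * ρ * T
  rw [integral_eq_lintegral_of_nonneg_ae (Filter.Eventually.of_forall fun y => hFnn y)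
    hFcont.aestronglyMeasurable.restrict]
  apply ENNReal.toReal_le_of_le_ofReal hRHS0
  set A : Set (EuclideanSpace ℝ (Fin n)) := {y | 2 * ‖y - x₁‖ ≤ d} with hA_def
  have hsing : ∀ z : EuclideanSpace ℝ (Fin n), volume ({z} : Set (EuclideanSpace ℝ (Fin n))) = 0 := by
    intro z
    refine measure_mono_null ?_ (volume.addHaar_sphere z 0)
    intro y hy
    rw [mem_singleton_iff] at hy
    show dist y z = 0
    rw [hy, dist_self]
  have hgm : ∀ z : EuclideanSpace ℝ (Fin n), Measurable fun y : EuclideanSpace ℝ (Fin n) =>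
      ENNReal.ofReal (‖y - z‖ ^ (-((n : ℝ) - 1))) := by
    intro z
    exact ENNReal.measurable_ofReal.comp
      (((continuous_id.sub continuous_const).norm.measurable).pow_const _)
  have htri1 : ∀ y : EuclideanSpace ℝ (Fin n), s ≤ ‖y - x₁‖ + ‖y - x₂‖ := by
    intro y
    calc s = ‖(x₁ - y) + (y - x₂)‖ := by rw [sub_add_sub_cancel]
      _ ≤ ‖x₁ - y‖ + ‖y - x₂‖ := norm_add_le _ _
      _ = ‖y - x₁‖ + ‖y - x₂‖ := by rw [norm_sub_rev]
  have htri2 : ∀ y : EuclideanSpace ℝ (Fin n), ‖y - x₁‖ ≤ s + ‖y - x₂‖ := by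
    intro y
    calc ‖y - x₁‖ = ‖(y - x₂) + (x₂ - x₁)‖ := by rw [sub_add_sub_cancel]
      _ ≤ ‖y - x₂‖ + ‖x₂ - x₁‖ := norm_add_le _ _
      _ = s + ‖y - x₂‖ := by rw [hs_def, norm_sub_rev x₂ x₁]; ring
  -- region A bound
  have hMnnA : (0:ℝ) ≤ 2 * 8 ^ p * T := mul_nonneg (by positivity) hT0
  have hMnnB : (0:ℝ) ≤ 4 ^ p * T := mul_nonneg (by positivity) hT0
  have hAbound : ∫⁻ y in closedBall x₂ (4 * ρ) ∩ A, ENNReal.ofReal (F y)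
      ≤ ENNReal.ofReal (2 * 8 ^ p * T * κ * (8 * ρ)) * B := by
    set aa : ℝ := max (s - 4 * ρ) 0 with haa_def
    set bb : ℝ := min (d / 2) (s + 4 * ρ) with hbb_def
    have haeA : volume.restrict (closedBall x₂ (4 * ρ) ∩ A)
        = volume.restrict ((closedBall x₂ (4 * ρ) ∩ A) \ {x₁}) :=
      by
      have h0 : volume ((closedBall x₂ (4 * ρ) ∩ A) ∩ {x₁}) = 0 :=
        measure_mono_null inter_subset_right (hsing x₁)
      exact Measure.restrict_congr_set (diff_ae_eq_self.mpr h0).symm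
    calc ∫⁻ y in closedBall x₂ (4 * ρ) ∩ A, ENNReal.ofReal (F y)
        = ∫⁻ y in (closedBall x₂ (4 * ρ) ∩ A) \ {x₁}, ENNReal.ofReal (F y) := by
          rw [haeA]
      _ ≤ ∫⁻ y in (closedBall x₂ (4 * ρ) ∩ A) \ {x₁},
            ENNReal.ofReal (2 * 8 ^ p * T) * ENNReal.ofReal (‖y - x₁‖ ^ (-((n : ℝ) - 1))) := by
          apply setLIntegral_mono ((hgm x₁).const_mul _)
          rintro y ⟨⟨hycb, hyA⟩, hyx₁⟩
          have hyne : y ≠ x₁ := by simpa using hyx₁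
          have hr₁ : 0 < ‖y - x₁‖ := by
            rw [norm_pos_iff]; exact sub_ne_zero.mpr hyne
          rw [← ENNReal.ofReal_mul hMnnA]
          apply ENNReal.ofReal_le_ofReal
          have hyA' : 2 * ‖y - x₁‖ ≤ ε₂ + s := hyA
          have := ptA n hn hε₁ hε₂ hs hr₁ (norm_nonneg (y - x₂)) (htri1 y) hyA'
          calc F y ≤ 2 * 8 ^ p * (ε₁ * ε₂ / (ε₂ ^ 2 + s ^ 2)) ^ p * ‖y - x₁‖ ^ (-((n : ℝ) - 1)) := this
            _ = 2 * 8 ^ p * T * ‖y - x₁‖ ^ (-((n : ℝ) - 1)) := by rw [hT_def, hDD_def]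
      _ = ENNReal.ofReal (2 * 8 ^ p * T) *
            ∫⁻ y in (closedBall x₂ (4 * ρ) ∩ A) \ {x₁},
              ENNReal.ofReal (‖y - x₁‖ ^ (-((n : ℝ) - 1))) :=
          lintegral_const_mul' _ _ ENNReal.ofReal_ne_top
      _ ≤ ENNReal.ofReal (2 * 8 ^ p * T) *
            ∫⁻ y in {y : EuclideanSpace ℝ (Fin n) | aa ≤ ‖y - x₁‖ ∧ ‖y - x₁‖ ≤ bb},
              ENNReal.ofReal (‖y - x₁‖ ^ (-((n : ℝ) - 1))) := by
          apply mul_le_mul_right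
          apply lintegral_mono_set
          rintro y ⟨⟨hycb, hyA⟩, -⟩
          have hycb' : ‖y - x₂‖ ≤ 4 * ρ := by rwa [mem_closedBall, dist_eq_norm] at hycb
          have h1 := htri1 y
          have h2 := htri2 y
          have hyA' : 2 * ‖y - x₁‖ ≤ ε₂ + s := hyA
          constructor
          · exact max_le (by linarith) (norm_nonneg _)
          · exact le_min (by rw [hd_def]; linarith) (by linarith)
      _ ≤ ENNReal.ofReal (2 * 8 ^ p * T) * (ENNReal.ofReal κ * B * ENNReal.ofReal (bb - aa)) :=
          mul_le_mul_right (annulus_lintegral_bound n (by omega) x₁ aa bb (le_max_right _ _)) _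
      _ ≤ ENNReal.ofReal (2 * 8 ^ p * T) * (ENNReal.ofReal κ * B * ENNReal.ofReal (8 * ρ)) := by
          apply mul_le_mul_right
          apply mul_le_mul_right
          apply ENNReal.ofReal_le_ofReal
          rcases le_or_gt (4 * ρ) s with h | h
          · have heq : aa = s - 4 * ρ := max_eq_left (by linarith)
            have h2 : bb ≤ s + 4 * ρ := min_le_right _ _
            rw [heq]; linarith
          · have h1 : (0:ℝ) ≤ aa := le_max_right _ _
            have h2 : bb ≤ s + 4 * ρ := min_le_right _ _
            linarith
      _ = ENNReal.ofReal (2 * 8 ^ p * T * κ * (8 * ρ)) * B := by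
          rw [enn_helper _ _ _ hMnnA hκ0.le]
  -- region B bound
  have hBbound : ∫⁻ y in closedBall x₂ (4 * ρ) ∩ Aᶜ, ENNReal.ofReal (F y)
      ≤ ENNReal.ofReal (4 ^ p * T * κ * (4 * ρ)) * B := by
    have haeB : volume.restrict (closedBall x₂ (4 * ρ) ∩ Aᶜ)
        = volume.restrict ((closedBall x₂ (4 * ρ) ∩ Aᶜ) \ {x₂}) :=
      by
      have h0 : volume ((closedBall x₂ (4 * ρ) ∩ Aᶜ) ∩ {x₂}) = 0 :=
        measure_mono_null inter_subset_right (hsing x₂)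
      exact Measure.restrict_congr_set (diff_ae_eq_self.mpr h0).symm
    calc ∫⁻ y in closedBall x₂ (4 * ρ) ∩ Aᶜ, ENNReal.ofReal (F y)
        = ∫⁻ y in (closedBall x₂ (4 * ρ) ∩ Aᶜ) \ {x₂}, ENNReal.ofReal (F y) := by
          rw [haeB]
      _ ≤ ∫⁻ y in (closedBall x₂ (4 * ρ) ∩ Aᶜ) \ {x₂},
            ENNReal.ofReal (4 ^ p * T) * ENNReal.ofReal (‖y - x₂‖ ^ (-((n : ℝ) - 1))) := by
          apply setLIntegral_mono ((hgm x₂).const_mul _)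
          rintro y ⟨⟨hycb, hyA⟩, hyx₂⟩
          have hyne : y ≠ x₂ := by simpa using hyx₂
          have hr₂ : 0 < ‖y - x₂‖ := by
            rw [norm_pos_iff]; exact sub_ne_zero.mpr hyne
          have hyA' : ε₂ + s < 2 * ‖y - x₁‖ := by
            have : ¬ (2 * ‖y - x₁‖ ≤ d) := hyA
            rw [hd_def] at this; linarith [not_le.mp this]
          rw [← ENNReal.ofReal_mul hMnnB]
          apply ENNReal.ofReal_le_ofReal
          have := ptB n hn hε₁ hε₂ hs (norm_nonneg (y - x₁)) hr₂ hyA'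
          calc F y ≤ 4 ^ p * (ε₁ * ε₂ / (ε₂ ^ 2 + s ^ 2)) ^ p * ‖y - x₂‖ ^ (-((n : ℝ) - 1)) := this
            _ = 4 ^ p * T * ‖y - x₂‖ ^ (-((n : ℝ) - 1)) := by rw [hT_def, hDD_def]
      _ = ENNReal.ofReal (4 ^ p * T) *
            ∫⁻ y in (closedBall x₂ (4 * ρ) ∩ Aᶜ) \ {x₂},
              ENNReal.ofReal (‖y - x₂‖ ^ (-((n : ℝ) - 1))) :=
          lintegral_const_mul' _ _ ENNReal.ofReal_ne_top
      _ ≤ ENNReal.ofReal (4 ^ p * T) *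
            ∫⁻ y in {y : EuclideanSpace ℝ (Fin n) | 0 ≤ ‖y - x₂‖ ∧ ‖y - x₂‖ ≤ 4 * ρ},
              ENNReal.ofReal (‖y - x₂‖ ^ (-((n : ℝ) - 1))) := by
          apply mul_le_mul_right
          apply lintegral_mono_set
          rintro y ⟨⟨hycb, -⟩, -⟩
          have hycb' : ‖y - x₂‖ ≤ 4 * ρ := by rwa [mem_closedBall, dist_eq_norm] at hycb
          exact ⟨norm_nonneg _, hycb'⟩
      _ ≤ ENNReal.ofReal (4 ^ p * T) * (ENNReal.ofReal κ * B * ENNReal.ofReal (4 * ρ - 0)) :=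
          mul_le_mul_right (annulus_lintegral_bound n (by omega) x₂ 0 (4 * ρ) le_rfl) _
      _ = ENNReal.ofReal (4 ^ p * T * κ * (4 * ρ)) * B := by
          rw [enn_helper _ _ _ hMnnB hκ0.le, sub_zero]
  -- combine
  calc ∫⁻ y in closedBall x₂ (4 * ρ), ENNReal.ofReal (F y)
      ≤ ∫⁻ y in (closedBall x₂ (4 * ρ) ∩ A) ∪ (closedBall x₂ (4 * ρ) ∩ Aᶜ),
          ENNReal.ofReal (F y) := by
        apply lintegral_mono_set
        intro y hy
        by_cases h : y ∈ A
        exacts [Or.inl ⟨hy, h⟩, Or.inr ⟨hy, h⟩]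
    _ ≤ (∫⁻ y in closedBall x₂ (4 * ρ) ∩ A, ENNReal.ofReal (F y))
        + ∫⁻ y in closedBall x₂ (4 * ρ) ∩ Aᶜ, ENNReal.ofReal (F y) :=
        lintegral_union_le _ _ _
    _ ≤ ENNReal.ofReal (2 * 8 ^ p * T * κ * (8 * ρ)) * B
        + ENNReal.ofReal (4 ^ p * T * κ * (4 * ρ)) * B := add_le_add hAbound hBbound
    _ = ENNReal.ofReal (2 * 8 ^ p * T * κ * (8 * ρ) + 4 ^ p * T * κ * (4 * ρ)) * B := by
        rw [← add_mul, ← ENNReal.ofReal_add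
          (mul_nonneg (mul_nonneg hMnnA hκ0.le) (by positivity))
          (mul_nonneg (mul_nonneg hMnnB hκ0.le) (by positivity))]
    _ = ENNReal.ofReal ((2 * 8 ^ p * T * κ * (8 * ρ) + 4 ^ p * T * κ * (4 * ρ)) * B.toReal) := by
        rw [ENNReal.ofReal_mul (by
          exact add_nonneg (mul_nonneg (mul_nonneg hMnnA hκ0.le) (by positivity))
            (mul_nonneg (mul_nonneg hMnnB hκ0.le) (by positivity))),
          ENNReal.ofReal_toReal hBne]
    _ ≤ ENNReal.ofReal (C * ρ * T) := by
        apply ENNReal.ofReal_le_ofReal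
        apply le_of_eq
        rw [hC_def]; ring
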